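/- arXiv:1710.09572 — 5 statements merged into one kernel-verified Lean document; each statement's English description precedes it below -/
import Mathlib

section
/- For every positive integer M, the integral ∫₀^∞ x^(M-1) e^(-x) ln(x) / (M-1)! dx equals -γ + Σ_{k=1}^{M-1} 1/k, where γ is the Euler–Mascheroni constant. -/
open Real MeasureTheory

lemma gamma_log_integral_aux (n : ℕ) :
    ∫ x in Set.Ioi (0 : ℝ), x ^ n * Real.exp (-x) * Real.log x =
      (Nat.factorial n) * (-Real.eulerMascheroniConstant + harmonic n) := by
  -- complex derivative of GammaIntegral at n+1
  have h1 : HasDerivAt Complex.GammaIntegral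
      (∫ t : ℝ in Set.Ioi 0, (t : ℂ) ^ ((n + 1 : ℂ) - 1) * (Real.log t * Real.exp (-t)))
      (n + 1) := by
    apply Complex.hasDerivAt_GammaIntegral
    simp [Complex.add_re]
    positivity
  have h2 : HasDerivAt Complex.Gamma
      (∫ t : ℝ in Set.Ioi 0, (t : ℂ) ^ ((n + 1 : ℂ) - 1) * (Real.log t * Real.exp (-t)))
      (n + 1) := by
    apply h1.congr_of_eventuallyEq
    have hopen : IsOpen {s : ℂ | 0 < s.re} := isOpen_lt continuous_const Complex.continuous_re
    filter_upwards [hopen.mem_nhds (by simp [Set.mem_setOf_eq]; positivity : ((n : ℂ) + 1) ∈ {s : ℂ | 0 < s.re})] with s hs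
    exact Complex.Gamma_eq_integral hs
  have h3 := Complex.hasDerivAt_Gamma_nat n
  have h4 := h2.unique h3
  -- rewrite the complex integral as the coercion of the real one
  have h5 : (∫ t : ℝ in Set.Ioi 0, (t : ℂ) ^ ((n + 1 : ℂ) - 1) * (Real.log t * Real.exp (-t)))
      = ((∫ t : ℝ in Set.Ioi 0, t ^ n * Real.exp (-t) * Real.log t : ℝ) : ℂ) := by
    have hco : ∀ r : ℝ, Complex.ofReal r = @RCLike.ofReal ℂ _ r := fun r => rfl
    conv_rhs => rw [hco, ← integral_ofReal]
    apply setIntegral_congr_fun measurableSet_Ioi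
    intro t ht
    have ht' : (0 : ℝ) < t := ht
    dsimp only
    rw [← hco, show ((n : ℂ) + 1) - 1 = (n : ℂ) by ring, Complex.cpow_natCast]
    push_cast
    ring
  rw [h5] at h4
  have := congrArg Complex.re h4
  simpa using this

/-- For every positive integer `M`,
`∫₀^∞ x^(M-1) e^(-x) ln x / (M-1)! dx = -γ + ∑_{k=1}^{M-1} 1/k`. -/
theorem gamma_log_integral (M : ℕ) (hM : 0 < M) :
    ∫ x in Set.Ioi (0 : ℝ),
        x ^ (M - 1) * Real.exp (-x) * Real.log x / (Nat.factorial (M - 1)) =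
      -Real.eulerMascheroniConstant + ∑ k ∈ Finset.Icc 1 (M - 1), (1 : ℝ) / k := by
  rw [integral_div, gamma_log_integral_aux (M - 1)]
  rw [mul_comm, mul_div_assoc, div_self (by positivity : ((M - 1).factorial : ℝ) ≠ 0), mul_one]
  congr 1
  rw [harmonic_eq_sum_Icc, Rat.cast_sum]
  simp [one_div]
end

section
/- The Euler–Mascheroni constant satisfies γ = -∫₀^∞ e^(-x) ln(x) dx. -/
open Real MeasureTheory

lemma hasDerivAt_Gamma_one_integral :
    HasDerivAt Real.Gamma (∫ x in Set.Ioi (0 : ℝ), Real.exp (-x) * Real.log x) 1 := by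
  have h := Complex.hasDerivAt_GammaIntegral (s := 1) (by norm_num)
  have heq : Complex.GammaIntegral =ᶠ[nhds (1 : ℂ)] Complex.Gamma := by
    have : {s : ℂ | 0 < s.re} ∈ nhds (1 : ℂ) := by
      refine IsOpen.mem_nhds (isOpen_lt continuous_const Complex.continuous_re) (by norm_num)
    filter_upwards [this] with s hs
    exact (Complex.Gamma_eq_integral hs).symm
  have h2 : HasDerivAt Complex.Gamma
      (∫ t : ℝ in Set.Ioi 0, (t : ℂ) ^ ((1 : ℂ) - 1) * (Real.log t * Real.exp (-t))) 1 :=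
    h.congr_of_eventuallyEq heq.symm
  have h3 := h2.real_of_complex
  have hval : (∫ t : ℝ in Set.Ioi 0,
      (t : ℂ) ^ ((1 : ℂ) - 1) * (Real.log t * Real.exp (-t))).re
      = ∫ x in Set.Ioi (0 : ℝ), Real.exp (-x) * Real.log x := by
    simp only [sub_self, Complex.cpow_zero, one_mul]
    rw [show (fun t : ℝ => ((Real.log t : ℂ) * (Real.exp (-t) : ℂ)))
        = fun t : ℝ => ((Real.log t * Real.exp (-t) : ℝ) : ℂ) by
      funext t; push_cast; ring]
    rw [show (∫ t : ℝ in Set.Ioi 0, ((Real.log t * Real.exp (-t) : ℝ) : ℂ))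
        = ((∫ t : ℝ in Set.Ioi 0, Real.log t * Real.exp (-t) : ℝ) : ℂ) from integral_ofReal,
      Complex.ofReal_re]
    exact MeasureTheory.integral_congr_ae (Filter.Eventually.of_forall fun t => mul_comm _ _)
  rw [hval] at h3
  convert h3 using 2 with x
  rw [Complex.Gamma_ofReal, Complex.ofReal_re]

/-- The Euler–Mascheroni constant satisfies `γ = -∫₀^∞ e^(-x) ln x dx`. -/
theorem eulerMascheroni_eq_neg_integral :
    Real.eulerMascheroniConstant = -∫ x in Set.Ioi (0 : ℝ), Real.exp (-x) * Real.log x := by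
  have h1 := Real.hasDerivAt_Gamma_one
  have h2 := hasDerivAt_Gamma_one_integral
  have := h1.unique h2
  linarith
end

section
/- Let X ≥ 0 be an integrable real random variable. Then the function Γ(ρ) = ln(1 + ρ E[X]) - E[ln(1 + ρ X)] is monotonically nondecreasing in ρ on [0, ∞). -/
open Real MeasureTheory

/-- For `0 ≤ a ≤ b`, the function `x ↦ log(1+bx) - log(1+ax)` is concave on `[0, ∞)`. -/
lemma gap_aux_concave {a b : ℝ} (ha : 0 ≤ a) (hab : a ≤ b) :
    ConcaveOn ℝ (Set.Ici 0) (fun x : ℝ => Real.log (1 + b * x) - Real.log (1 + a * x)) := by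
  have hb : 0 ≤ b := ha.trans hab
  have hpos : ∀ c : ℝ, 0 ≤ c → ∀ x : ℝ, (0:ℝ) ≤ x → 0 < 1 + c * x := by
    intro c hc x hx; nlinarith
  refine concaveOn_of_hasDerivWithinAt2_nonpos (f' := fun x => b / (1 + b * x) - a / (1 + a * x))
    (f'' := fun x => -(b * b) / (1 + b * x) ^ 2 + (a * a) / (1 + a * x) ^ 2)
    (convex_Ici 0) ?_ ?_ ?_ ?_
  · apply ContinuousOn.sub
    · exact ContinuousOn.log (Continuous.continuousOn (by continuity))
        (fun x hx => (hpos b hb x hx).ne')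
    · exact ContinuousOn.log (Continuous.continuousOn (by continuity))
        (fun x hx => (hpos a ha x hx).ne')
  · intro x hx
    rw [interior_Ici] at hx
    have hx0 : (0:ℝ) ≤ x := le_of_lt hx
    have h1 : HasDerivAt (fun x : ℝ => 1 + b * x) b x := by
      simpa using ((hasDerivAt_id x).const_mul b).const_add 1
    have h2 : HasDerivAt (fun x : ℝ => 1 + a * x) a x := by
      simpa using ((hasDerivAt_id x).const_mul a).const_add 1
    have hd : HasDerivAt (fun x : ℝ => Real.log (1 + b * x) - Real.log (1 + a * x))
        (b / (1 + b * x) - a / (1 + a * x)) x :=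
      (h1.log (hpos b hb x hx0).ne').sub (h2.log (hpos a ha x hx0).ne')
    exact hd.hasDerivWithinAt
  · intro x hx
    rw [interior_Ici] at hx
    have hx0 : (0:ℝ) ≤ x := le_of_lt hx
    have h1 : HasDerivAt (fun x : ℝ => 1 + b * x) b x := by
      simpa using ((hasDerivAt_id x).const_mul b).const_add 1
    have h2 : HasDerivAt (fun x : ℝ => 1 + a * x) a x := by
      simpa using ((hasDerivAt_id x).const_mul a).const_add 1
    have hd1 : HasDerivAt (fun x : ℝ => b / (1 + b * x))
        (-(b * b) / (1 + b * x) ^ 2) x := by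
      have := (h1.inv (hpos b hb x hx0).ne').const_mul b
      rw [show (fun x : ℝ => b / (1 + b * x)) = fun y => b * (fun x => 1 + b * x)⁻¹ y from by
        funext y; simp [div_eq_mul_inv]]
      exact this.congr_deriv (by ring)
    have hd2 : HasDerivAt (fun x : ℝ => a / (1 + a * x))
        (-(a * a) / (1 + a * x) ^ 2) x := by
      have := (h2.inv (hpos a ha x hx0).ne').const_mul a
      rw [show (fun x : ℝ => a / (1 + a * x)) = fun y => a * (fun x => 1 + a * x)⁻¹ y from by
        funext y; simp [div_eq_mul_inv]]
      exact this.congr_deriv (by ring)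
    have hd := hd1.sub hd2
    have : -(b * b) / (1 + b * x) ^ 2 - -(a * a) / (1 + a * x) ^ 2
        = -(b * b) / (1 + b * x) ^ 2 + (a * a) / (1 + a * x) ^ 2 := by ring
    rw [this] at hd
    exact hd.hasDerivWithinAt
  · intro x hx
    rw [interior_Ici] at hx
    have hx0 : (0:ℝ) ≤ x := le_of_lt hx
    have hbp := hpos b hb x hx0
    have hap := hpos a ha x hx0
    have key : a * a / (1 + a * x) ^ 2 ≤ b * b / (1 + b * x) ^ 2 := by
      rw [div_le_div_iff₀ (by positivity) (by positivity)]
      nlinarith [mul_nonneg (mul_nonneg ha hb) hx0, mul_nonneg ha hx0,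
        mul_nonneg hb hx0, mul_nonneg (mul_nonneg ha ha) (mul_nonneg hb hx0)]
    have : -(b * b) / (1 + b * x) ^ 2 + a * a / (1 + a * x) ^ 2 ≤ 0 := by
      rw [neg_div]; linarith
    exact this

/-- Integrability of `ω ↦ log(1 + ρ X ω)` for `ρ ≥ 0` and nonnegative integrable `X`. -/
lemma gap_aux_integrable {Ω : Type*} [MeasureSpace Ω] (X : Ω → ℝ) (hX : Integrable X)
    (hX0 : ∀ ω, 0 ≤ X ω) {ρ : ℝ} (hρ : 0 ≤ ρ) :
    Integrable (fun ω => Real.log (1 + ρ * X ω)) := by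
  have hmeas : AEStronglyMeasurable (fun ω => Real.log (1 + ρ * X ω)) volume := by
    exact (Real.measurable_log.comp_aemeasurable
      (((hX.aemeasurable.const_mul ρ).const_add 1))).aestronglyMeasurable
  refine (hX.const_mul ρ).mono hmeas (Filter.Eventually.of_forall fun ω => ?_)
  have hx0 : 0 ≤ X ω := hX0 ω
  have h1 : (0:ℝ) ≤ ρ * X ω := mul_nonneg hρ hx0
  have hlog0 : 0 ≤ Real.log (1 + ρ * X ω) := Real.log_nonneg (by linarith)
  have hle : Real.log (1 + ρ * X ω) ≤ ρ * X ω := by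
    have := Real.log_le_sub_one_of_pos (x := 1 + ρ * X ω) (by linarith)
    linarith
  rw [Real.norm_eq_abs, Real.norm_eq_abs, abs_of_nonneg hlog0, abs_of_nonneg h1]
  exact hle

/-- For a nonnegative integrable random variable `X` on a probability space, the gap
`ρ ↦ ln(1 + ρ E[X]) - E[ln(1 + ρ X)]` is monotonically nondecreasing on `[0, ∞)`. -/
theorem gap_monotone {Ω : Type*} [MeasureSpace Ω] [IsProbabilityMeasure (volume : Measure Ω)]
    (X : Ω → ℝ) (hX : Integrable X) (hX0 : ∀ ω, 0 ≤ X ω) :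
    MonotoneOn
      (fun ρ : ℝ => Real.log (1 + ρ * ∫ ω, X ω) - ∫ ω, Real.log (1 + ρ * X ω))
      (Set.Ici 0) := by
  intro a ha b hb hab
  simp only [Set.mem_Ici] at ha hb
  have hconc := gap_aux_concave ha hab
  have hia := gap_aux_integrable X hX hX0 ha
  have hib := gap_aux_integrable X hX hX0 hb
  have hcont : ContinuousOn (fun x : ℝ => Real.log (1 + b * x) - Real.log (1 + a * x))
      (Set.Ici 0) := by
    have hpos : ∀ c : ℝ, 0 ≤ c → ∀ x : ℝ, x ∈ Set.Ici (0:ℝ) → (1 + c * x) ≠ 0 := by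
      intro c hc x hx; have : (0:ℝ) ≤ x := hx; nlinarith
    exact (ContinuousOn.log (Continuous.continuousOn (by continuity)) (hpos b hb)).sub
      (ContinuousOn.log (Continuous.continuousOn (by continuity)) (hpos a ha))
  have hjensen := hconc.le_map_integral hcont isClosed_Ici
    (Filter.Eventually.of_forall fun ω => hX0 ω) hX (by
      show Integrable ((fun x => Real.log (1 + b * x) - Real.log (1 + a * x)) ∘ X)
      exact hib.sub hia)
  rw [integral_sub hib hia] at hjensen
  dsimp only
  linarith
end

section
/- Let X be a random variable with Gamma(M,1) density f(x) = x^{M-1} e^{-x}/(M-1)! on (0,∞), M a positive integer. Then lim_{ρ→∞} [ln(1 + ρM) - E[ln(1 + ρX)]] = γ - (Σ_{k=1}^{M} 1/k - ln M) + 1/M. -/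
open Real MeasureTheory Filter

local notation "γ" => Real.eulerMascheroniConstant

section GammaGapAux

open Set Complex





lemma int_pow_exp (n : ℕ) : IntegrableOn (fun x : ℝ => x ^ n * Real.exp (-x)) (Set.Ioi 0) := by
  have h := Real.GammaIntegral_convergent (s := n + 1) (by positivity)
  refine h.congr_fun (fun x hx => ?_) measurableSet_Ioi
  rw [add_sub_cancel_right]; beta_reduce; rw [Real.rpow_natCast, mul_comm]

lemma int_pow_exp_eq (n : ℕ) :
    ∫ x in Set.Ioi (0:ℝ), x ^ n * Real.exp (-x) = (n.factorial : ℝ) := by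
  have h := (Real.Gamma_eq_integral (s := n + 1) (by positivity)).symm
  rw [Real.Gamma_nat_eq_factorial] at h
  rw [← h]
  refine setIntegral_congr_fun measurableSet_Ioi (fun x hx => ?_)
  rw [add_sub_cancel_right]; beta_reduce; rw [Real.rpow_natCast, mul_comm]






lemma complex_log_moment (n : ℕ) :
    ∫ t in Set.Ioi (0:ℝ), (t:ℂ) ^ (((n:ℂ) + 1) - 1) * (Real.log t * Real.exp (-t)) =
      (n.factorial : ℂ) * (-(γ:ℂ) + (harmonic n : ℂ)) := by
  have hd1 : HasDerivAt Complex.GammaIntegral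
      (∫ t in Set.Ioi (0:ℝ), (t:ℂ) ^ (((n:ℂ) + 1) - 1) * (Real.log t * Real.exp (-t)))
      ((n:ℂ) + 1) :=
    Complex.hasDerivAt_GammaIntegral (by simp; positivity)
  have hev : Complex.GammaIntegral =ᶠ[nhds ((n:ℂ) + 1)] Complex.Gamma := by
    have hop : ∀ᶠ s in nhds ((n:ℂ) + 1), 0 < s.re := by
      have : IsOpen {s : ℂ | 0 < s.re} := isOpen_lt continuous_const Complex.continuous_re
      exact this.eventually_mem (by simp; positivity)
    filter_upwards [hop] with s hs
    exact (Complex.Gamma_eq_integral hs).symm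
  have hd2 : HasDerivAt Complex.GammaIntegral
      ((n.factorial : ℂ) * (-(γ:ℂ) + (harmonic n : ℂ))) ((n:ℂ) + 1) :=
    (Complex.hasDerivAt_Gamma_nat n).congr_of_eventuallyEq hev
  exact hd1.unique hd2

lemma aux_eq (n : ℕ) {t : ℝ} (ht : t ∈ Set.Ioi (0:ℝ)) :
    (t:ℂ) ^ (((n:ℂ) + 1) - 1) * (Real.log t * Real.exp (-t)) =
      ((Real.log t * (t ^ n * Real.exp (-t)) : ℝ) : ℂ) := by
  rw [add_sub_cancel_right, Complex.cpow_natCast]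
  push_cast
  ring

lemma log_moment_integrable (n : ℕ) :
    IntegrableOn (fun x : ℝ => Real.log x * (x ^ n * Real.exp (-x))) (Set.Ioi 0) := by
  have h := (mellin_hasDerivAt_of_isBigO_rpow (E := ℂ)
      (f := fun t : ℝ => (Real.exp (-t) : ℂ)) (s := (n:ℂ) + 1) (a := (n:ℝ) + 2) (b := 0)
      ?_ ?_ ?_ ?_ ?_).1
  · have h' : IntegrableOn
        (fun t : ℝ => (t:ℂ) ^ (((n:ℂ) + 1) - 1) • (Real.log t • (Real.exp (-t) : ℂ)))
        (Set.Ioi 0) := h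
    have h2 : IntegrableOn (fun t : ℝ => ((Real.log t * (t ^ n * Real.exp (-t)) : ℝ) : ℂ))
        (Set.Ioi 0) := by
      refine h'.congr_fun (fun t ht => ?_) measurableSet_Ioi
      rw [← aux_eq n ht]
      beta_reduce
      rw [Complex.real_smul, smul_eq_mul]
    have hm : AEStronglyMeasurable (fun x : ℝ => Real.log x * (x ^ n * Real.exp (-x)))
        (volume.restrict (Set.Ioi 0)) := by
      exact (Real.measurable_log.mul ((measurable_id.pow_const n).mul
        (Real.measurable_exp.comp measurable_neg))).aestronglyMeasurable
    rw [IntegrableOn, ← integrable_norm_iff hm]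
    have := h2.norm
    refine this.congr (Filter.Eventually.of_forall (fun t => ?_))
    exact Complex.norm_real _
  · exact (Complex.continuous_ofReal.comp (Real.continuous_exp.comp continuous_neg)).continuousOn.locallyIntegrableOn measurableSet_Ioi
  · rw [← Asymptotics.isBigO_norm_left]
    simp_rw [Complex.norm_real, Asymptotics.isBigO_norm_left]
    simpa only [neg_one_mul] using (isLittleO_exp_neg_mul_rpow_atTop zero_lt_one _).isBigO
  · simp
    all_goals positivity
  · simp_rw [neg_zero, Real.rpow_zero]
    refine Asymptotics.isBigO_const_of_tendsto (?_ : Tendsto _ _ (nhds (1 : ℂ))) one_ne_zero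
    rw [(by simp : (1 : ℂ) = Real.exp (-0))]
    exact (Complex.continuous_ofReal.comp (Real.continuous_exp.comp continuous_neg)).continuousWithinAt
  · simp
    all_goals positivity

lemma log_moment_eq (n : ℕ) :
    ∫ x in Set.Ioi (0:ℝ), Real.log x * (x ^ n * Real.exp (-x)) =
      (n.factorial : ℝ) * (-γ + (harmonic n : ℝ)) := by
  have hC := complex_log_moment n
  rw [setIntegral_congr_fun measurableSet_Ioi (fun t ht => aux_eq n ht)] at hC
  have h2 : (∫ x in Set.Ioi (0:ℝ), ((Real.log x * (x ^ n * Real.exp (-x)) : ℝ) : ℂ)) =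
      ((∫ x in Set.Ioi (0:ℝ), Real.log x * (x ^ n * Real.exp (-x)) : ℝ) : ℂ) :=
    integral_ofReal
  rw [h2] at hC
  exact_mod_cast hC






lemma tendsto_log_one_add {α : Type*} {l : Filter α} {g : α → ℝ}
    (hg : Tendsto g l (nhds 0)) :
    Tendsto (fun t => Real.log (1 + g t)) l (nhds 0) := by
  have h1 : Tendsto (fun t => 1 + g t) l (nhds 1) := by
    simpa using tendsto_const_nhds.add hg
  have := ((Real.continuousAt_log one_ne_zero).tendsto).comp h1
  simpa [Function.comp_def] using this

lemma one_div_rho_tendsto (x : ℝ) (hx : 0 < x) :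
    Tendsto (fun ρ : ℝ => 1 / (ρ * x)) atTop (nhds 0) := by
  have h : Tendsto (fun ρ : ℝ => ρ * x) atTop atTop :=
    Tendsto.atTop_mul_const hx tendsto_id
  have h2 : Tendsto (fun ρ : ℝ => (ρ * x)⁻¹) atTop (nhds 0) := h.inv_tendsto_atTop
  simpa [one_div] using h2






section helpers

lemma hiden {ρ x : ℝ} (hρ : 0 < ρ) (hx : 0 < x) :
    Real.log (1 + ρ * x) - Real.log ρ - Real.log x = Real.log (1 + 1 / (ρ * x)) := by
  have hpx : 0 < ρ * x := by positivity
  rw [show (1:ℝ) + 1 / (ρ * x) = (1 + ρ * x) / (ρ * x) by field_simp; ring]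
  rw [Real.log_div (by positivity) hpx.ne', Real.log_mul hρ.ne' hx.ne']
  ring

lemma log_one_add_le {t : ℝ} (ht : 0 ≤ t) : Real.log (1 + t) ≤ t := by
  have := Real.log_le_sub_one_of_pos (x := 1 + t) (by linarith)
  linarith

end helpers



end GammaGapAux

/-- For `X` with Gamma(M,1) density `x^(M-1) e^(-x)/(M-1)!` on `(0,∞)`, the gap
`ln(1 + ρM) - E[ln(1 + ρX)]` tends, as `ρ → ∞`, to
`γ - (∑_{k=1}^M 1/k - ln M) + 1/M`. -/
theorem gamma_gap_limit (M : ℕ) (hM : 0 < M) :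
    Tendsto
      (fun ρ : ℝ => Real.log (1 + ρ * M) -
        ∫ x in Set.Ioi (0 : ℝ),
          Real.log (1 + ρ * x) * (x ^ (M - 1) * Real.exp (-x) / (Nat.factorial (M - 1))))
      atTop
      (nhds (Real.eulerMascheroniConstant -
        ((∑ k ∈ Finset.Icc 1 M, (1 : ℝ) / k) - Real.log M) + 1 / M)) := by
  set n := M - 1 with hn
  have hM1 : n + 1 = M := Nat.succ_pred_eq_of_pos hM
  have hMpos : (0:ℝ) < M := by exact_mod_cast hM
  set c : ℝ := (Nat.factorial n : ℝ) with hc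
  have hc0 : (0:ℝ) < c := by
    rw [hc]
    exact_mod_cast Nat.factorial_pos n
  set f : ℝ → ℝ := fun x => x ^ n * Real.exp (-x) / c with hf
  have hf_nonneg : ∀ x : ℝ, 0 < x → 0 ≤ f x := fun x hx =>
    div_nonneg (mul_nonneg (pow_nonneg hx.le n) (Real.exp_pos _).le) hc0.le
  have hf_meas : Measurable f :=
    ((measurable_id.pow_const n).mul (Real.measurable_exp.comp measurable_neg)).div_const c
  have hf_int : IntegrableOn f (Set.Ioi 0) := (int_pow_exp n).div_const c
  have hf_one : ∫ x in Set.Ioi (0:ℝ), f x = 1 := by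
    simp only [hf, div_eq_mul_inv]
    rw [integral_mul_const, int_pow_exp_eq]
    field_simp
    exact hc.symm
  have hlog_int : IntegrableOn (fun x => Real.log x * f x) (Set.Ioi 0) := by
    have h := (log_moment_integrable n).div_const c
    exact h.congr (Filter.Eventually.of_forall (fun x => by simp [hf, mul_div_assoc]))
  have hIlog : ∫ x in Set.Ioi (0:ℝ), Real.log x * f x = -γ + (harmonic n : ℝ) := by
    have : (fun x : ℝ => Real.log x * f x)
        = fun x => (Real.log x * (x ^ n * Real.exp (-x))) / c := by
      funext x; simp [hf, mul_div_assoc]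
    rw [this, integral_div, log_moment_eq]
    field_simp
    rw [hc]; ring
  -- integrability of log(1+ρx) * f for ρ > 0
  have h1 : ∀ ρ : ℝ, 0 < ρ →
      IntegrableOn (fun x => Real.log (1 + ρ * x) * f x) (Set.Ioi 0) := by
    intro ρ hρ
    have hb : IntegrableOn (fun x : ℝ => ρ * (x ^ (n+1) * Real.exp (-x) / c)) (Set.Ioi 0) :=
      ((int_pow_exp (n+1)).div_const c).const_mul ρ
    refine hb.mono' ?_ ?_
    · exact ((Real.measurable_log.comp
        (measurable_const.add (measurable_const.mul measurable_id))).mul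
        hf_meas).aestronglyMeasurable
    · filter_upwards [ae_restrict_mem measurableSet_Ioi] with x hx
      have hx0 : (0:ℝ) < x := hx
      have hl0 : 0 ≤ Real.log (1 + ρ * x) := Real.log_nonneg (by nlinarith)
      have hle : Real.log (1 + ρ * x) ≤ ρ * x := log_one_add_le (by positivity)
      rw [Real.norm_eq_abs, _root_.abs_of_nonneg (mul_nonneg hl0 (hf_nonneg x hx0))]
      calc Real.log (1 + ρ * x) * f x ≤ (ρ * x) * f x :=
            mul_le_mul_of_nonneg_right hle (hf_nonneg x hx0)
        _ = ρ * (x ^ (n+1) * Real.exp (-x) / c) := by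
            simp only [hf]; rw [pow_succ]; ring
  -- the deviation integrand
  set Fa : ℝ → ℝ → ℝ :=
    fun ρ x => (Real.log (1 + ρ * x) - Real.log ρ - Real.log x) * f x with hFa
  have hA_int : ∀ ρ : ℝ, 0 < ρ → IntegrableOn (Fa ρ) (Set.Ioi 0) := by
    intro ρ hρ
    have h := ((h1 ρ hρ).sub (hf_int.const_mul (Real.log ρ))).sub hlog_int
    exact h.congr (Filter.Eventually.of_forall (fun x => by simp [hFa]; ring))
  have hA_eq : ∀ ρ : ℝ, 0 < ρ →
      ∫ x in Set.Ioi (0:ℝ), Fa ρ x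
        = (∫ x in Set.Ioi (0:ℝ), Real.log (1 + ρ * x) * f x)
          - Real.log ρ - (-γ + (harmonic n : ℝ)) := by
    intro ρ hρ
    have hrw : (Fa ρ) = fun x =>
        (Real.log (1 + ρ * x) * f x - Real.log ρ * f x) - Real.log x * f x := by
      funext x; simp [hFa]; ring
    have i2 : IntegrableOn (fun x => Real.log ρ * f x) (Set.Ioi 0) := hf_int.const_mul _
    have i12 : IntegrableOn
        (fun x => Real.log (1 + ρ * x) * f x - Real.log ρ * f x) (Set.Ioi 0) := by
      exact (h1 ρ hρ).sub i2
    rw [hrw, integral_sub i12 hlog_int, integral_sub (h1 ρ hρ) i2,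
      integral_const_mul, hf_one, hIlog]
    ring
  -- T2 : deviation integral tends to 0
  have hT2 : Tendsto (fun ρ : ℝ => ∫ x in Set.Ioi (0:ℝ), Fa ρ x) atTop (nhds 0) := by
    have key := tendsto_integral_filter_of_dominated_convergence
      (F := Fa) (l := atTop) (μ := volume.restrict (Set.Ioi 0)) (f := fun _ => (0:ℝ))
      (fun x => (Real.log (1 + x) - Real.log x) * f x) ?_ ?_ ?_ ?_
    · simpa using key
    · filter_upwards with ρ
      exact (((Real.measurable_log.comp
        (measurable_const.add (measurable_const.mul measurable_id))).sub
        measurable_const).sub Real.measurable_log).mul hf_meas |>.aestronglyMeasurable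
    · filter_upwards [eventually_ge_atTop (1:ℝ)] with ρ hρ
      have hρ0 : (0:ℝ) < ρ := lt_of_lt_of_le one_pos hρ
      filter_upwards [ae_restrict_mem measurableSet_Ioi] with x hx
      have hx0 : (0:ℝ) < x := hx
      have hb1 : Real.log (1 + x) - Real.log x = Real.log (1 + 1 / x) := by
        have := hiden one_pos hx0
        simpa using this
      have hb2 : Real.log (1 + ρ * x) - Real.log ρ - Real.log x
          = Real.log (1 + 1 / (ρ * x)) := hiden hρ0 hx0
      have hpx : 0 < ρ * x := mul_pos hρ0 hx0
      have hdp : 0 < 1 / (ρ * x) := one_div_pos.mpr hpx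
      have hnn : 0 ≤ Real.log (1 + 1 / (ρ * x)) := Real.log_nonneg (by linarith)
      have hmono : Real.log (1 + 1 / (ρ * x)) ≤ Real.log (1 + 1 / x) := by
        have h1x : 1 / (ρ * x) ≤ 1 / x :=
          one_div_le_one_div_of_le hx0 (le_mul_of_one_le_left hx0.le hρ)
        exact Real.log_le_log (by linarith) (by linarith)
      show ‖(Real.log (1 + ρ * x) - Real.log ρ - Real.log x) * f x‖
        ≤ (Real.log (1 + x) - Real.log x) * f x
      rw [hb2, hb1, Real.norm_eq_abs, _root_.abs_of_nonneg (mul_nonneg hnn (hf_nonneg x hx0))]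
      exact mul_le_mul_of_nonneg_right hmono (hf_nonneg x hx0)
    · have h := (h1 1 one_pos).sub hlog_int
      refine h.congr (Filter.Eventually.of_forall (fun x => by simp; ring))
    · filter_upwards [ae_restrict_mem measurableSet_Ioi] with x hx
      have hx0 : (0:ℝ) < x := hx
      have hlog0 : Tendsto (fun ρ : ℝ => Real.log (1 + 1 / (ρ * x))) atTop (nhds 0) :=
        tendsto_log_one_add (one_div_rho_tendsto x hx0)
      have hmul : Tendsto (fun ρ : ℝ => Real.log (1 + 1 / (ρ * x)) * f x) atTop (nhds 0) := by
        simpa using hlog0.mul_const (f x)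
      refine hmul.congr' ?_
      filter_upwards [eventually_gt_atTop (0:ℝ)] with ρ hρ0
      simp only [hFa]
      rw [hiden hρ0 hx0]
  -- T1
  have hT1 : Tendsto (fun ρ : ℝ => Real.log (1 + 1 / (ρ * M))) atTop (nhds 0) :=
    tendsto_log_one_add (one_div_rho_tendsto _ hMpos)
  -- combine
  have hcomb : Tendsto
      (fun ρ : ℝ => (Real.log (1 + 1 / (ρ * M)) - ∫ x in Set.Ioi (0:ℝ), Fa ρ x)
        + (Real.log M - (-γ + (harmonic n : ℝ))))
      atTop (nhds ((0 - 0) + (Real.log M - (-γ + (harmonic n : ℝ))))) :=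
    (hT1.sub hT2).add_const _
  have hfin : Tendsto
      (fun ρ : ℝ => (Real.log (1 + 1 / (ρ * M)) - ∫ x in Set.Ioi (0:ℝ), Fa ρ x)
        + (Real.log M - (-γ + (harmonic n : ℝ))))
      atTop (nhds (γ - ((∑ k ∈ Finset.Icc 1 M, (1 : ℝ) / k) - Real.log M) + 1 / M)) := by
    have hsum : (∑ k ∈ Finset.Icc 1 M, (1 : ℝ) / k) = (harmonic n : ℝ) + 1 / M := by
      have h1 : (harmonic M : ℚ) = ∑ i ∈ Finset.Icc 1 M, (i : ℚ)⁻¹ := harmonic_eq_sum_Icc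
      have h2 : harmonic M = harmonic n + ((n:ℚ) + 1)⁻¹ := by
        rw [← hM1]; exact_mod_cast harmonic_succ n
      have h3 : ((n:ℚ) + 1) = (M:ℚ) := by exact_mod_cast congrArg (Nat.cast (R := ℚ)) hM1
      rw [h3] at h2
      rw [h2] at h1
      have := congrArg (Rat.cast (K := ℝ)) h1
      push_cast at this
      simp only [one_div]
      rw [← this]
    rw [hsum]
    convert hcomb using 2
    ring
  refine hfin.congr' ?_
  filter_upwards [eventually_ge_atTop (1:ℝ)] with ρ hρ
  have hρ0 : (0:ℝ) < ρ := lt_of_lt_of_le one_pos hρ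
  have hlm : Real.log (1 + 1 / (ρ * M))
      = Real.log (1 + ρ * M) - Real.log ρ - Real.log M := (hiden hρ0 hMpos).symm
  rw [hA_eq ρ hρ0, hlm]
  ring
end

section
/- Let X be a random variable on (0,∞) with density f(x) = Σ_{i=1}^{p} e^{-x/λ_i}/(λ_i ∏_{l≠i}(1 - λ_l/λ_i)) for pairwise distinct positive λ_i. Then for all ρ > 0, 0 ≤ ln(1 + ρ Σ_i λ_i) - E[ln(1 + ρX)] ≤ γ - (Σ_{i=1}^{p} ln λ_i / ∏_{l≠i}(1 - λ_l/λ_i) - ln(Σ_{i=1}^{p} λ_i)). -/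
open Real MeasureTheory Finset

section AlgPart
open Polynomial Lagrange

variable {ι : Type*} [DecidableEq ι] {s : Finset ι} {v : ι → ℝ}

lemma coeff_lagrange_basis (hvs : Set.InjOn v s) {i : ι} (hi : i ∈ s) :
    (Lagrange.basis s v i).coeff (#s - 1) = nodalWeight s v i := by
  have hnd := Lagrange.natDegree_basis hvs hi
  rw [← hnd, ← Polynomial.leadingCoeff]
  unfold Lagrange.basis
  rw [Polynomial.leadingCoeff_prod]
  unfold nodalWeight
  apply Finset.prod_congr rfl
  intro l hl
  have hne : v i ≠ v l := by
    intro h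
    exact (Finset.ne_of_mem_erase hl) (hvs hi (Finset.mem_of_mem_erase hl) h).symm
  unfold basisDivisor
  rw [Polynomial.leadingCoeff_mul, Polynomial.leadingCoeff_C, Polynomial.leadingCoeff_X_sub_C, mul_one]

lemma coeff_interpolate (hvs : Set.InjOn v s) (r : ι → ℝ) :
    (Lagrange.interpolate s v r).coeff (#s - 1) = ∑ i ∈ s, r i * nodalWeight s v i := by
  rw [Lagrange.interpolate_apply, Polynomial.finset_sum_coeff]
  apply Finset.sum_congr rfl
  intro i hi
  rw [Polynomial.coeff_C_mul, coeff_lagrange_basis hvs hi]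

lemma sum_pow_mul_nodalWeight_of_lt (hvs : Set.InjOn v s) {k : ℕ} (hk : k < #s) :
    ∑ i ∈ s, v i ^ k * nodalWeight s v i = if #s - 1 = k then 1 else 0 := by
  have h : (X : ℝ[X]) ^ k = Lagrange.interpolate s v (fun i => v i ^ k) := by
    apply Lagrange.eq_interpolate_of_eval_eq _ hvs
    · calc ((X : ℝ[X]) ^ k).degree ≤ k := Polynomial.degree_X_pow_le k
        _ < (#s : ℕ) := by exact_mod_cast hk
    · intro i _; simp
  rw [← coeff_interpolate hvs, ← h, Polynomial.coeff_X_pow]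

lemma sum_pow_card_mul_nodalWeight (hvs : Set.InjOn v s) (hs : s.Nonempty) :
    ∑ i ∈ s, v i ^ (#s) * nodalWeight s v i = ∑ i ∈ s, v i := by
  have hcard : 1 ≤ #s := Finset.card_pos.mpr hs
  set q : ℝ[X] := X ^ (#s) - nodal s v with hq
  have hdeg : q.degree < (#s : ℕ) := by
    have h1 : ((X : ℝ[X]) ^ (#s)).degree = (#s : ℕ) := Polynomial.degree_X_pow _
    have h2 : (nodal s v).degree = (#s : ℕ) := Lagrange.degree_nodal
    have := Polynomial.degree_sub_lt (h1.trans h2.symm)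
      ((Polynomial.monic_X_pow _).ne_zero) (by
        rw [Polynomial.Monic.leadingCoeff (Polynomial.monic_X_pow _),
          (Lagrange.nodal_monic).leadingCoeff])
    rwa [h1] at this
  have heq : q = Lagrange.interpolate s v (fun i => v i ^ (#s)) := by
    apply Lagrange.eq_interpolate_of_eval_eq _ hvs hdeg
    intro i hi
    simp [hq, Lagrange.eval_nodal_at_node hi]
  have := congrArg (fun r => Polynomial.coeff r (#s - 1)) heq
  simp only [coeff_interpolate hvs] at this
  rw [← this, hq, Polynomial.coeff_sub, Polynomial.coeff_X_pow,
    if_neg (by omega)]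
  have hnext : (nodal s v).coeff (#s - 1) = -∑ i ∈ s, v i := by
    have h1 := Polynomial.prod_X_sub_C_nextCoeff (s := s) v
    rw [Polynomial.nextCoeff] at h1
    rw [Lagrange.nodal_eq]
    rw [Polynomial.natDegree_prod_of_monic _ _ (fun i _ => Polynomial.monic_X_sub_C _)] at h1
    simp only [Polynomial.natDegree_X_sub_C, Finset.sum_const, smul_eq_mul, mul_one] at h1
    rwa [if_neg (by omega)] at h1
  rw [hnext]; ring

end AlgPart

section IntgPart
open Set Filter

lemma integral_log_mul_exp_neg :
    ∫ t in Ioi (0:ℝ), Real.log t * Real.exp (-t) = -Real.eulerMascheroniConstant := by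
  have h1 : HasDerivAt Complex.GammaIntegral
      (∫ t : ℝ in Ioi 0, (t:ℂ) ^ ((1:ℂ) - 1) * (Real.log t * Real.exp (-t))) 1 :=
    Complex.hasDerivAt_GammaIntegral (by norm_num)
  have h2 : HasDerivAt Complex.GammaIntegral (-(Real.eulerMascheroniConstant:ℂ)) 1 := by
    refine Complex.hasDerivAt_Gamma_one.congr_of_eventuallyEq ?_
    have hopen : IsOpen {s : ℂ | 0 < s.re} := isOpen_lt continuous_const Complex.continuous_re
    filter_upwards [hopen.mem_nhds (by norm_num : (0:ℝ) < (1:ℂ).re)] with s hs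
    exact (Complex.Gamma_eq_integral hs).symm
  have h3 := h1.unique h2
  have h4 : (∫ t : ℝ in Ioi 0, (t:ℂ) ^ ((1:ℂ) - 1) * (Real.log t * Real.exp (-t)))
      = ((∫ t in Ioi (0:ℝ), Real.log t * Real.exp (-t) : ℝ) : ℂ) := by
    have h5 := integral_ofReal (𝕜 := ℂ) (f := fun t => Real.log t * Real.exp (-t))
      (μ := (volume : Measure ℝ).restrict (Ioi 0))
    rw [show ((∫ t in Ioi (0:ℝ), Real.log t * Real.exp (-t) : ℝ) : ℂ)
        = ∫ t in Ioi (0:ℝ), ((Real.log t * Real.exp (-t) : ℝ) : ℂ) from h5.symm]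
    apply setIntegral_congr_fun measurableSet_Ioi
    intro t ht
    push_cast
    simp
  rw [h4] at h3
  exact_mod_cast h3

lemma gamma_ne_zero' : Real.eulerMascheroniConstant ≠ 0 := by
  have := Real.one_half_lt_eulerMascheroniConstant; linarith

lemma integrable_log_mul_exp_neg :
    IntegrableOn (fun t => Real.log t * Real.exp (-t)) (Ioi (0:ℝ)) := by
  by_contra h
  have := MeasureTheory.integral_undef h
  rw [integral_log_mul_exp_neg] at this
  exact gamma_ne_zero' (by linarith)

variable {lam : ℝ} (hlam : 0 < lam)

include hlam

lemma integral_exp_comp : ∫ x in Ioi (0:ℝ), Real.exp (-x / lam) = lam := by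
  have h := MeasureTheory.integral_comp_mul_left_Ioi (fun t => Real.exp (-t)) 0
    (inv_pos.mpr hlam)
  simp only [mul_zero, smul_eq_mul, inv_inv, integral_exp_neg_Ioi, neg_zero, Real.exp_zero,
    mul_one] at h
  calc ∫ x in Ioi (0:ℝ), Real.exp (-x / lam)
      = ∫ x in Ioi (0:ℝ), Real.exp (-(lam⁻¹ * x)) := by
        apply setIntegral_congr_fun measurableSet_Ioi
        intro t ht
        show Real.exp (-t / lam) = Real.exp (-(lam⁻¹ * t))
        rw [neg_div, div_eq_inv_mul]
    _ = lam := h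

lemma integrable_exp_comp : IntegrableOn (fun x => Real.exp (-x / lam)) (Ioi (0:ℝ)) := by
  have h := exp_neg_integrableOn_Ioi 0 (inv_pos.mpr hlam)
  apply MeasureTheory.IntegrableOn.congr_fun h ?_ measurableSet_Ioi
  intro x hx
  simp only
  rw [neg_div, div_eq_inv_mul, neg_mul]

omit hlam in
lemma integral_id_mul_exp_aux : ∫ x in Ioi (0:ℝ), x * Real.exp (-x) = 1 := by
  have h := Real.Gamma_eq_integral (by norm_num : (0:ℝ) < 2)
  rw [Real.Gamma_two] at h
  rw [h]
  apply setIntegral_congr_fun measurableSet_Ioi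
  intro t ht
  show t * Real.exp (-t) = Real.exp (-t) * t ^ ((2:ℝ) - 1)
  rw [show (2:ℝ) - 1 = 1 by norm_num, Real.rpow_one, mul_comm]

lemma integral_div_mul_exp_comp : ∫ x in Ioi (0:ℝ), (x / lam) * Real.exp (-x / lam) = lam := by
  have h := MeasureTheory.integral_comp_mul_left_Ioi (fun t => t * Real.exp (-t)) 0
    (inv_pos.mpr hlam)
  simp only [mul_zero, smul_eq_mul, inv_inv] at h
  rw [integral_id_mul_exp_aux, mul_one] at h
  calc ∫ x in Ioi (0:ℝ), (x / lam) * Real.exp (-x / lam)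
      = ∫ x in Ioi (0:ℝ), (lam⁻¹ * x) * Real.exp (-(lam⁻¹ * x)) := by
        apply setIntegral_congr_fun measurableSet_Ioi
        intro t ht
        show t / lam * Real.exp (-t / lam) = lam⁻¹ * t * Real.exp (-(lam⁻¹ * t))
        rw [neg_div, div_eq_inv_mul]
    _ = lam := h

lemma integrable_div_mul_exp_comp :
    IntegrableOn (fun x => (x / lam) * Real.exp (-x / lam)) (Ioi (0:ℝ)) := by
  by_contra h
  have := MeasureTheory.integral_undef h
  rw [integral_div_mul_exp_comp hlam] at this
  exact hlam.ne' this

lemma integrable_id_mul_exp_comp :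
    IntegrableOn (fun x => x * Real.exp (-x / lam)) (Ioi (0:ℝ)) := by
  have h := (integrable_div_mul_exp_comp hlam).const_mul lam
  apply MeasureTheory.IntegrableOn.congr_fun h ?_ measurableSet_Ioi
  intro x hx
  simp only
  field_simp

lemma integral_id_mul_exp_comp : ∫ x in Ioi (0:ℝ), x * Real.exp (-x / lam) = lam ^ 2 := by
  have h2 : ∫ x in Ioi (0:ℝ), lam * ((x / lam) * Real.exp (-x / lam)) = lam ^ 2 := by
    rw [integral_const_mul, integral_div_mul_exp_comp hlam, sq]
  rw [← h2]
  apply setIntegral_congr_fun measurableSet_Ioi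
  intro x hx
  field_simp

lemma integral_log_div_mul_exp_comp :
    ∫ x in Ioi (0:ℝ), Real.log (x / lam) * Real.exp (-x / lam)
      = -Real.eulerMascheroniConstant * lam := by
  have h := MeasureTheory.integral_comp_mul_left_Ioi (fun t => Real.log t * Real.exp (-t)) 0
    (inv_pos.mpr hlam)
  simp only [mul_zero, smul_eq_mul, inv_inv] at h
  rw [integral_log_mul_exp_neg] at h
  calc ∫ x in Ioi (0:ℝ), Real.log (x / lam) * Real.exp (-x / lam)
      = ∫ x in Ioi (0:ℝ), Real.log (lam⁻¹ * x) * Real.exp (-(lam⁻¹ * x)) := by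
        apply setIntegral_congr_fun measurableSet_Ioi
        intro t ht
        show Real.log (t / lam) * Real.exp (-t / lam) = Real.log (lam⁻¹ * t) * Real.exp (-(lam⁻¹ * t))
        rw [neg_div, div_eq_inv_mul]
    _ = -Real.eulerMascheroniConstant * lam := by rw [h]; ring

lemma integrable_log_div_mul_exp_comp :
    IntegrableOn (fun x => Real.log (x / lam) * Real.exp (-x / lam)) (Ioi (0:ℝ)) := by
  by_contra h
  have := MeasureTheory.integral_undef h
  rw [integral_log_div_mul_exp_comp hlam] at this
  have h2 : Real.eulerMascheroniConstant * lam = 0 := by linarith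
  rcases mul_eq_zero.mp h2 with h | h
  · exact gamma_ne_zero' h
  · exact hlam.ne' h

lemma integrable_log_mul_exp_comp :
    IntegrableOn (fun x => Real.log x * Real.exp (-x / lam)) (Ioi (0:ℝ)) := by
  have h1 := (integrable_log_div_mul_exp_comp hlam).add
    ((integrable_exp_comp hlam).const_mul (Real.log lam))
  apply MeasureTheory.IntegrableOn.congr_fun h1 ?_ measurableSet_Ioi
  intro x hx
  have hx0 : (0:ℝ) < x := hx
  simp only [Pi.add_apply]
  rw [Real.log_div (ne_of_gt hx0) hlam.ne']
  ring

lemma integral_log_mul_exp_comp :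
    ∫ x in Ioi (0:ℝ), Real.log x * Real.exp (-x / lam)
      = (Real.log lam - Real.eulerMascheroniConstant) * lam := by
  have h1 : ∀ x ∈ Ioi (0:ℝ), Real.log x * Real.exp (-x / lam)
      = Real.log (x / lam) * Real.exp (-x / lam) + Real.log lam * Real.exp (-x / lam) := by
    intro x hx
    have hx0 : (0:ℝ) < x := hx
    rw [Real.log_div (ne_of_gt hx0) hlam.ne']
    ring
  rw [setIntegral_congr_fun measurableSet_Ioi h1,
    MeasureTheory.integral_add (integrable_log_div_mul_exp_comp hlam)
      ((integrable_exp_comp hlam).const_mul (Real.log lam)),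
    integral_log_div_mul_exp_comp hlam, integral_const_mul, integral_exp_comp hlam]
  ring

lemma integrable_log_one_add_mul_exp_comp {ρ : ℝ} (hρ : 0 < ρ) :
    IntegrableOn (fun x => Real.log (1 + ρ * x) * Real.exp (-x / lam)) (Ioi (0:ℝ)) := by
  have hmeas : AEStronglyMeasurable (fun x => Real.log (1 + ρ * x) * Real.exp (-x / lam))
      (volume.restrict (Ioi (0:ℝ))) := by
    apply Measurable.aestronglyMeasurable
    exact (Real.measurable_log.comp (measurable_const.add (measurable_id.const_mul ρ))).mul
      (Real.measurable_exp.comp (measurable_id.neg.div_const lam))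
  apply Integrable.mono ((integrable_id_mul_exp_comp hlam).const_mul ρ) hmeas
  filter_upwards [ae_restrict_mem measurableSet_Ioi] with x hx
  have hx0 : (0:ℝ) < x := hx
  have h1 : 0 ≤ Real.log (1 + ρ * x) := Real.log_nonneg (by nlinarith)
  have h2 : Real.log (1 + ρ * x) ≤ ρ * x := by
    have := Real.log_le_sub_one_of_pos (show (0:ℝ) < 1 + ρ * x by nlinarith)
    linarith
  rw [Real.norm_eq_abs, Real.norm_eq_abs, abs_of_nonneg (by positivity),
    abs_of_nonneg (by positivity : (0:ℝ) ≤ ρ * (x * Real.exp (-x / lam)))]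
  have hexp : 0 < Real.exp (-x / lam) := Real.exp_pos _
  nlinarith

end IntgPart

section ConvPart
open Set Lagrange

variable {p : ℕ}

noncomputable def Acoef (lam : Fin p → ℝ) (s : Finset (Fin p)) (i : Fin p) : ℝ :=
  lam i ^ (#s) * nodalWeight s lam i / (lam i) ^ 2

noncomputable def Fdens (lam : Fin p → ℝ) (s : Finset (Fin p)) (x : ℝ) : ℝ :=
  ∑ i ∈ s, Real.exp (-x / lam i) * Acoef lam s i

variable {lam : Fin p → ℝ} (hpos : ∀ i, 0 < lam i) (hdist : Function.Injective lam)

include hpos hdist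

lemma Acoef_eq {s : Finset (Fin p)} {i : Fin p} (hi : i ∈ s) :
    Acoef lam s i = lam i ^ (#s - 1) * nodalWeight s lam i / lam i := by
  have h1 : 1 ≤ #s := Finset.card_pos.mpr ⟨i, hi⟩
  have h2 : lam i ≠ 0 := (hpos i).ne'
  rw [Acoef, show #s = (#s - 1) + 1 by omega, pow_succ, Nat.add_sub_cancel]
  field_simp

lemma sum_Acoef {s : Finset (Fin p)} (hs : 2 ≤ #s) : ∑ i ∈ s, Acoef lam s i = 0 := by
  have h0 : ∀ i ∈ s, Acoef lam s i = lam i ^ (#s - 2) * nodalWeight s lam i := by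
    intro i hi
    have h2 : lam i ≠ 0 := (hpos i).ne'
    rw [Acoef, show #s = (#s - 2) + 2 by omega, pow_add, Nat.add_sub_cancel]
    field_simp
  rw [Finset.sum_congr rfl h0, sum_pow_mul_nodalWeight_of_lt (hdist.injOn) (by omega),
    if_neg (by omega)]

lemma Acoef_insert {t : Finset (Fin p)} {i j : Fin p} (hi : i ∈ t) (hj : j ∉ t) :
    Acoef lam (insert j t) i = Acoef lam t i * (lam i / (lam i - lam j)) := by
  have hij : i ≠ j := fun h => hj (h ▸ hi)
  have hlij : lam i - lam j ≠ 0 := sub_ne_zero.mpr (fun h => hij (hdist h))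
  have h2 : lam i ≠ 0 := (hpos i).ne'
  have hw : nodalWeight (insert j t) lam i = nodalWeight t lam i * (lam i - lam j)⁻¹ := by
    rw [nodalWeight, nodalWeight, Finset.erase_insert_of_ne hij.symm,
      Finset.prod_insert (fun h => hj (Finset.mem_of_mem_erase h))]
    ring
  rw [Acoef, Acoef, hw, Finset.card_insert_of_notMem hj, pow_succ]
  field_simp

omit hpos hdist in
lemma Fdens_continuous (s : Finset (Fin p)) : Continuous (Fdens lam s) := by
  apply continuous_finset_sum
  intro i _
  exact (Real.continuous_exp.comp ((continuous_id.neg).div_const _)).mul continuous_const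

lemma conv_exp {i j : Fin p} (hij : i ≠ j) (x : ℝ) :
    ∫ y in (0:ℝ)..x, Real.exp (-y / lam i) * Real.exp (-(x - y) / lam j)
      = (Real.exp (-x / lam i) - Real.exp (-x / lam j)) * (lam i * lam j / (lam i - lam j)) := by
  have hi := hpos i
  have hj := hpos j
  have hlij : lam i - lam j ≠ 0 := sub_ne_zero.mpr (fun h => hij (hdist h))
  set c : ℝ := 1 / lam j - 1 / lam i with hc
  have hc0 : c ≠ 0 := by
    rw [hc]
    intro h
    have : lam i = lam j := by
      field_simp at h
      linarith
    exact hij (hdist this)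
  have hH : ∀ y ∈ Set.uIcc (0:ℝ) x, HasDerivAt
      (fun y => Real.exp (-x / lam j) * Real.exp (c * y) / c)
      (Real.exp (-y / lam i) * Real.exp (-(x - y) / lam j)) y := by
    intro y _
    have h1 : HasDerivAt (fun y : ℝ => c * y) c y := by
      simpa using (hasDerivAt_id y).const_mul c
    have h2 := h1.exp
    have h3 := (h2.const_mul (Real.exp (-x / lam j))).div_const c
    refine h3.congr_deriv ?_
    rw [mul_div_assoc, mul_div_cancel_right₀ _ hc0, ← Real.exp_add, ← Real.exp_add]
    congr 1
    rw [hc]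
    have hine : lam i ≠ 0 := hi.ne'
    have hjne : lam j ≠ 0 := hj.ne'
    field_simp
    ring
  have hint : IntervalIntegrable
      (fun y => Real.exp (-y / lam i) * Real.exp (-(x - y) / lam j)) volume 0 x := by
    apply Continuous.intervalIntegrable
    exact (Real.continuous_exp.comp ((continuous_id.neg).div_const _)).mul
      (Real.continuous_exp.comp (((continuous_const.sub continuous_id).neg).div_const _))
  rw [intervalIntegral.integral_eq_sub_of_hasDerivAt hH hint]
  have hcx : Real.exp (-x / lam j) * Real.exp (c * x) = Real.exp (-x / lam i) := by
    rw [← Real.exp_add]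
    congr 1
    rw [hc]
    field_simp [hi.ne', hj.ne']
    ring
  have hcinv : 1 / c = lam i * lam j / (lam i - lam j) := by
    rw [hc]
    field_simp [hi.ne', hj.ne']
  rw [mul_zero, Real.exp_zero, mul_one, div_sub_div_same, hcx]
  rw [div_eq_mul_one_div, hcinv]

lemma Fdens_insert {t : Finset (Fin p)} {j : Fin p} (hj : j ∉ t) (ht : t.Nonempty) (x : ℝ) :
    Fdens lam (insert j t) x
      = ∫ y in (0:ℝ)..x, Fdens lam t y * (Real.exp (-(x - y) / lam j) / lam j) := by
  have hcard2 : 2 ≤ #(insert j t) := by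
    rw [Finset.card_insert_of_notMem hj]
    have := Finset.card_pos.mpr ht
    omega
  have hj0 : lam j ≠ 0 := (hpos j).ne'
  have hstep : (fun y => Fdens lam t y * (Real.exp (-(x - y) / lam j) / lam j))
      = fun y => ∑ i ∈ t, (Acoef lam t i / lam j)
          * (Real.exp (-y / lam i) * Real.exp (-(x - y) / lam j)) := by
    funext y
    rw [Fdens, Finset.sum_mul]
    apply Finset.sum_congr rfl
    intro i _
    ring
  rw [hstep, intervalIntegral.integral_finset_sum]
  swap
  · intro i _
    apply Continuous.intervalIntegrable
    exact continuous_const.mul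
      ((Real.continuous_exp.comp ((continuous_id.neg).div_const _)).mul
        (Real.continuous_exp.comp (((continuous_const.sub continuous_id).neg).div_const _)))
  have hterm : ∀ i ∈ t,
      (∫ y in (0:ℝ)..x, (Acoef lam t i / lam j)
        * (Real.exp (-y / lam i) * Real.exp (-(x - y) / lam j)))
      = Acoef lam (insert j t) i * Real.exp (-x / lam i)
        - Acoef lam (insert j t) i * Real.exp (-x / lam j) := by
    intro i hi
    have hij : i ≠ j := fun h => hj (h ▸ hi)
    have hlij : lam i - lam j ≠ 0 := sub_ne_zero.mpr (fun h => hij (hdist h))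
    rw [intervalIntegral.integral_const_mul, conv_exp hpos hdist hij,
      Acoef_insert hpos hdist hi hj]
    have hine : lam i ≠ 0 := (hpos i).ne'
    have hjne : lam j ≠ 0 := (hpos j).ne'
    field_simp
  rw [Finset.sum_congr rfl hterm, Finset.sum_sub_distrib, ← Finset.sum_mul]
  have hAj : ∑ i ∈ t, Acoef lam (insert j t) i = - Acoef lam (insert j t) j := by
    have := sum_Acoef hpos hdist hcard2
    rw [Finset.sum_insert hj] at this
    linarith
  rw [hAj, Fdens, Finset.sum_insert hj]
  ring_nf
  rw [mul_comm]
  congr 1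
  apply Finset.sum_congr rfl
  intro i _
  ring

lemma Fdens_nonneg (s : Finset (Fin p)) (hs : s.Nonempty) :
    ∀ x : ℝ, 0 ≤ x → 0 ≤ Fdens lam s x := by
  induction hs using Finset.Nonempty.cons_induction with
  | singleton j =>
    intro x hx
    rw [Fdens, Finset.sum_singleton, Acoef]
    have := hpos j
    have h1 : nodalWeight {j} lam j = 1 := by
      rw [nodalWeight, Finset.erase_singleton, Finset.prod_empty]
    rw [h1, Finset.card_singleton]
    positivity
  | cons j t hj ht IH =>
    intro x hx
    rw [Finset.cons_eq_insert, Fdens_insert hpos hdist hj ht]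
    apply intervalIntegral.integral_nonneg hx
    intro y hy
    have hy0 : 0 ≤ y := hy.1
    have := IH y hy0
    have hej : 0 ≤ Real.exp (-(x - y) / lam j) / lam j := by
      have := hpos j
      positivity
    exact mul_nonneg this hej

end ConvPart

section MainPart
open Set Lagrange

section Main

variable {p : ℕ} (hp : 0 < p) {lam : Fin p → ℝ}
  (hpos : ∀ i, 0 < lam i) (hdist : Function.Injective lam)

include hp hpos hdist

lemma prod_one_sub_div_inv {i : Fin p} :
    (∏ l ∈ univ.erase i, (1 - lam l / lam i))⁻¹
      = lam i ^ (p - 1) * nodalWeight univ lam i := by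
  have hi := hpos i
  have hcard : #((univ : Finset (Fin p)).erase i) = p - 1 := by
    rw [Finset.card_erase_of_mem (Finset.mem_univ i)]; simp
  have hP : ∀ l ∈ (univ : Finset (Fin p)).erase i, lam i - lam l ≠ 0 := by
    intro l hl
    have : l ≠ i := Finset.ne_of_mem_erase hl
    exact sub_ne_zero.mpr (fun h => this (hdist h.symm))
  have hPne : (∏ l ∈ univ.erase i, (lam i - lam l)) ≠ 0 := Finset.prod_ne_zero_iff.mpr hP
  have h1 : ∏ l ∈ univ.erase i, (1 - lam l / lam i)
      = (∏ l ∈ univ.erase i, (lam i - lam l)) / lam i ^ (p - 1) := by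
    rw [← hcard, ← Finset.prod_const (lam i), ← Finset.prod_div_distrib]
    apply Finset.prod_congr rfl
    intro l _
    rw [one_sub_div hi.ne']
  have h2 : nodalWeight univ lam i = (∏ l ∈ univ.erase i, (lam i - lam l))⁻¹ := by
    rw [nodalWeight, ← Finset.prod_inv_distrib]
  rw [h1, h2, inv_div, div_eq_mul_inv]

lemma lam_mul_Acoef {i : Fin p} :
    lam i * Acoef lam univ i = lam i ^ (p - 1) * nodalWeight univ lam i := by
  have hi := hpos i
  rw [Acoef_eq hpos hdist (Finset.mem_univ i), show #(univ : Finset (Fin p)) = p by simp]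
  field_simp

lemma density_term_eq (x : ℝ) (i : Fin p) :
    Real.exp (-x / lam i) / (lam i * ∏ l ∈ univ.erase i, (1 - lam l / lam i))
      = Real.exp (-x / lam i) * Acoef lam univ i := by
  have hi := hpos i
  rw [div_eq_mul_inv, mul_inv, prod_one_sub_div_inv hp hpos hdist,
    Acoef_eq hpos hdist (Finset.mem_univ i), show #(univ : Finset (Fin p)) = p by simp]
  ring

lemma density_eq (x : ℝ) :
    (∑ i, Real.exp (-x / lam i) /
        (lam i * ∏ l ∈ univ.erase i, (1 - lam l / lam i)))
      = Fdens lam univ x := by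
  rw [Fdens]
  exact Finset.sum_congr rfl fun i _ => density_term_eq hp hpos hdist x i

-- integrability lemmas
lemma hIF : IntegrableOn (fun x => Fdens lam univ x) (Ioi (0:ℝ)) := by
  have : (fun x => Fdens lam univ x)
      = fun x => ∑ i, Real.exp (-x / lam i) * Acoef lam univ i := by
    funext x; rw [Fdens]
  rw [this]
  exact integrable_finset_sum _ fun i _ => (integrable_exp_comp (hpos i)).mul_const _

lemma hIxF : IntegrableOn (fun x => x * Fdens lam univ x) (Ioi (0:ℝ)) := by
  have : (fun x => x * Fdens lam univ x)
      = fun x => ∑ i, (x * Real.exp (-x / lam i)) * Acoef lam univ i := by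
    funext x; rw [Fdens, Finset.mul_sum]
    exact Finset.sum_congr rfl fun i _ => by ring
  rw [this]
  exact integrable_finset_sum _ fun i _ => (integrable_id_mul_exp_comp (hpos i)).mul_const _

lemma hILF : IntegrableOn (fun x => Real.log x * Fdens lam univ x) (Ioi (0:ℝ)) := by
  have : (fun x => Real.log x * Fdens lam univ x)
      = fun x => ∑ i, (Real.log x * Real.exp (-x / lam i)) * Acoef lam univ i := by
    funext x; rw [Fdens, Finset.mul_sum]
    exact Finset.sum_congr rfl fun i _ => by ring
  rw [this]
  exact integrable_finset_sum _ fun i _ => (integrable_log_mul_exp_comp (hpos i)).mul_const _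

lemma hIJ {ρ : ℝ} (hρ : 0 < ρ) :
    IntegrableOn (fun x => Real.log (1 + ρ * x) * Fdens lam univ x) (Ioi (0:ℝ)) := by
  have : (fun x => Real.log (1 + ρ * x) * Fdens lam univ x)
      = fun x => ∑ i, (Real.log (1 + ρ * x) * Real.exp (-x / lam i)) * Acoef lam univ i := by
    funext x; rw [Fdens, Finset.mul_sum]
    exact Finset.sum_congr rfl fun i _ => by ring
  rw [this]
  exact integrable_finset_sum _ fun i _ =>
    (integrable_log_one_add_mul_exp_comp (hpos i) hρ).mul_const _

-- integral values
lemma hF1 : ∫ x in Ioi (0:ℝ), Fdens lam univ x = 1 := by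
  have h : ∫ x in Ioi (0:ℝ), Fdens lam univ x
      = ∑ i, (∫ x in Ioi (0:ℝ), Real.exp (-x / lam i)) * Acoef lam univ i := by
    rw [show (fun x => Fdens lam univ x)
        = fun x => ∑ i, Real.exp (-x / lam i) * Acoef lam univ i from funext fun x => by rw [Fdens]]
    rw [MeasureTheory.integral_finset_sum _
      (fun i _ => (integrable_exp_comp (hpos i)).mul_const _)]
    exact Finset.sum_congr rfl fun i _ => by rw [integral_mul_const]
  rw [h]
  have h2 : ∀ i ∈ (univ : Finset (Fin p)),
      (∫ x in Ioi (0:ℝ), Real.exp (-x / lam i)) * Acoef lam univ i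
      = lam i ^ (p - 1) * nodalWeight univ lam i := by
    intro i _
    rw [integral_exp_comp (hpos i), lam_mul_Acoef hp hpos hdist]
  rw [Finset.sum_congr rfl h2]
  have h3 := sum_pow_mul_nodalWeight_of_lt (s := (univ : Finset (Fin p))) hdist.injOn
    (k := p - 1) (by simp; omega)
  rw [show #(univ : Finset (Fin p)) = p by simp] at h3
  rw [h3, if_pos rfl]

lemma hFx : ∫ x in Ioi (0:ℝ), x * Fdens lam univ x = ∑ i, lam i := by
  have h : ∫ x in Ioi (0:ℝ), x * Fdens lam univ x
      = ∑ i, (∫ x in Ioi (0:ℝ), x * Real.exp (-x / lam i)) * Acoef lam univ i := by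
    rw [show (fun x => x * Fdens lam univ x)
        = fun x => ∑ i, (x * Real.exp (-x / lam i)) * Acoef lam univ i from funext fun x => by
          rw [Fdens, Finset.mul_sum]; exact Finset.sum_congr rfl fun i _ => by ring]
    rw [MeasureTheory.integral_finset_sum _
      (fun i _ => (integrable_id_mul_exp_comp (hpos i)).mul_const _)]
    exact Finset.sum_congr rfl fun i _ => by rw [integral_mul_const]
  rw [h]
  have h2 : ∀ i ∈ (univ : Finset (Fin p)),
      (∫ x in Ioi (0:ℝ), x * Real.exp (-x / lam i)) * Acoef lam univ i
      = lam i ^ p * nodalWeight univ lam i := by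
    intro i _
    have hi := hpos i
    rw [integral_id_mul_exp_comp (hpos i), sq, mul_assoc,
      show lam i * Acoef lam univ i = lam i ^ (p-1) * nodalWeight univ lam i from
        lam_mul_Acoef hp hpos hdist, ← mul_assoc, ← pow_succ']
    congr 2
    omega
  rw [Finset.sum_congr rfl h2]
  have h3 := sum_pow_card_mul_nodalWeight (s := (univ : Finset (Fin p))) hdist.injOn
    (Finset.univ_nonempty_iff.mpr ⟨⟨0, hp⟩⟩)
  rw [show #(univ : Finset (Fin p)) = p by simp] at h3
  exact h3

lemma hFlog : ∫ x in Ioi (0:ℝ), Real.log x * Fdens lam univ x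
    = (∑ i, (lam i ^ (p - 1) * nodalWeight univ lam i) * Real.log (lam i))
      - Real.eulerMascheroniConstant := by
  have h : ∫ x in Ioi (0:ℝ), Real.log x * Fdens lam univ x
      = ∑ i, (∫ x in Ioi (0:ℝ), Real.log x * Real.exp (-x / lam i)) * Acoef lam univ i := by
    rw [show (fun x => Real.log x * Fdens lam univ x)
        = fun x => ∑ i, (Real.log x * Real.exp (-x / lam i)) * Acoef lam univ i from
          funext fun x => by
            rw [Fdens, Finset.mul_sum]; exact Finset.sum_congr rfl fun i _ => by ring]
    rw [MeasureTheory.integral_finset_sum _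
      (fun i _ => (integrable_log_mul_exp_comp (hpos i)).mul_const _)]
    exact Finset.sum_congr rfl fun i _ => by rw [integral_mul_const]
  rw [h]
  have h2 : ∀ i ∈ (univ : Finset (Fin p)),
      (∫ x in Ioi (0:ℝ), Real.log x * Real.exp (-x / lam i)) * Acoef lam univ i
      = (lam i ^ (p - 1) * nodalWeight univ lam i) * Real.log (lam i)
        - Real.eulerMascheroniConstant * (lam i ^ (p - 1) * nodalWeight univ lam i) := by
    intro i _
    rw [integral_log_mul_exp_comp (hpos i)]
    have := lam_mul_Acoef hp hpos hdist (i := i)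
    have expand : (Real.log (lam i) - Real.eulerMascheroniConstant) * lam i * Acoef lam univ i
        = (Real.log (lam i) - Real.eulerMascheroniConstant)
          * (lam i * Acoef lam univ i) := by ring
    rw [expand, this]
    ring
  rw [Finset.sum_congr rfl h2, Finset.sum_sub_distrib, ← Finset.mul_sum]
  have h3 := sum_pow_mul_nodalWeight_of_lt (s := (univ : Finset (Fin p))) hdist.injOn
    (k := p - 1) (by simp; omega)
  rw [show #(univ : Finset (Fin p)) = p by simp] at h3
  rw [h3, if_pos rfl, mul_one]

end Main

end MainPart

section FinalPart
open Set Lagrange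

/-- For `X` a hypoexponential random variable on `(0,∞)` with density
`f(x) = ∑ i, e^{-x/λᵢ}/(λᵢ ∏_{l≠i}(1 - λ_l/λᵢ))` for pairwise distinct positive `λᵢ`,
and any `ρ > 0`,
`0 ≤ ln(1 + ρ ∑ᵢ λᵢ) - E[ln(1 + ρX)]
   ≤ γ - (∑ i, ln λᵢ/∏_{l≠i}(1 - λ_l/λᵢ) - ln(∑ᵢ λᵢ))`. -/
theorem hypoexponential_gap_bound (p : ℕ) (hp : 0 < p) (lam : Fin p → ℝ)
    (hpos : ∀ i, 0 < lam i) (hdist : Function.Injective lam) (ρ : ℝ) (hρ : 0 < ρ) :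
    0 ≤ Real.log (1 + ρ * ∑ i, lam i) -
        ∫ x in Set.Ioi (0 : ℝ),
          Real.log (1 + ρ * x) *
            (∑ i, Real.exp (-x / lam i) /
              (lam i * ∏ l ∈ univ.erase i, (1 - lam l / lam i))) ∧
      Real.log (1 + ρ * ∑ i, lam i) -
        (∫ x in Set.Ioi (0 : ℝ),
          Real.log (1 + ρ * x) *
            (∑ i, Real.exp (-x / lam i) /
              (lam i * ∏ l ∈ univ.erase i, (1 - lam l / lam i)))) ≤
        Real.eulerMascheroniConstant -
          ((∑ i, Real.log (lam i) / ∏ l ∈ univ.erase i, (1 - lam l / lam i)) -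
            Real.log (∑ i, lam i)) := by
  classical
  have hK : Nonempty (Fin p) := ⟨⟨0, hp⟩⟩
  set m : ℝ := ∑ i, lam i with hm
  have hmpos : 0 < m := Finset.sum_pos (fun i _ => hpos i) Finset.univ_nonempty
  have h1m : 0 < 1 + ρ * m := by positivity
  have hIeq : (∫ x in Set.Ioi (0:ℝ), Real.log (1 + ρ * x) *
        (∑ i, Real.exp (-x / lam i) / (lam i * ∏ l ∈ univ.erase i, (1 - lam l / lam i))))
      = ∫ x in Set.Ioi (0:ℝ), Real.log (1 + ρ * x) * Fdens lam univ x := by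
    apply setIntegral_congr_fun measurableSet_Ioi
    intro x _
    simp only [density_eq hp hpos hdist]
  rw [hIeq]
  set J := ∫ x in Set.Ioi (0:ℝ), Real.log (1 + ρ * x) * Fdens lam univ x with hJ
  set L : ℝ := ∑ i, (lam i ^ (p - 1) * nodalWeight univ lam i) * Real.log (lam i) with hL
  have hFpos : ∀ x ∈ Set.Ioi (0:ℝ), 0 ≤ Fdens lam univ x := fun x hx =>
    Fdens_nonneg hpos hdist univ Finset.univ_nonempty x (le_of_lt hx)
  -- upper bound on J (Jensen)
  have hub : J ≤ Real.log (1 + ρ * m) := by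
    set b : ℝ := ρ / (1 + ρ * m) with hb
    set c : ℝ := Real.log (1 + ρ * m) - b * m with hc
    have hGint : IntegrableOn (fun x => c * Fdens lam univ x + b * (x * Fdens lam univ x))
        (Set.Ioi (0:ℝ)) := ((hIF hp hpos hdist).const_mul c).add ((hIxF hp hpos hdist).const_mul b)
    have hmono : J ≤ ∫ x in Set.Ioi (0:ℝ),
        (c * Fdens lam univ x + b * (x * Fdens lam univ x)) := by
      apply setIntegral_mono_on (hIJ hp hpos hdist hρ) hGint measurableSet_Ioi
      intro x hx
      have hx0 : (0:ℝ) < x := hx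
      have h1x : 0 < 1 + ρ * x := by positivity
      have hkey : Real.log (1 + ρ * x) ≤ c + b * x := by
        have hu : (0:ℝ) < (1 + ρ * x) / (1 + ρ * m) := by positivity
        have key := Real.log_le_sub_one_of_pos hu
        rw [Real.log_div h1x.ne' h1m.ne'] at key
        have hu1 : (1 + ρ * x) / (1 + ρ * m) - 1 = b * x - b * m := by
          rw [hb]; field_simp; ring
        rw [hc]
        linarith
      have hF := hFpos x hx
      have := mul_le_mul_of_nonneg_right hkey hF
      have hexp : (c + b * x) * Fdens lam univ x
          = c * Fdens lam univ x + b * (x * Fdens lam univ x) := by ring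
      linarith
    have hval : ∫ x in Set.Ioi (0:ℝ),
        (c * Fdens lam univ x + b * (x * Fdens lam univ x))
        = Real.log (1 + ρ * m) := by
      rw [MeasureTheory.integral_add ((hIF hp hpos hdist).const_mul c) ((hIxF hp hpos hdist).const_mul b),
        MeasureTheory.integral_const_mul, MeasureTheory.integral_const_mul,
        hF1 hp hpos hdist, hFx hp hpos hdist, ← hm]
      rw [hc]
      ring
    linarith
  -- lower bound on J
  have hlb : Real.log (1 + ρ * m) - Real.log m + (L - Real.eulerMascheroniConstant) ≤ J := by
    set d : ℝ := 1 / (m * (1 + ρ * m)) with hd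
    have hdpos : 0 < d := by rw [hd]; positivity
    set c : ℝ := Real.log (1 + ρ * m) - Real.log m + m * d with hc
    have hGint : IntegrableOn (fun x =>
        c * Fdens lam univ x + Real.log x * Fdens lam univ x - d * (x * Fdens lam univ x))
        (Set.Ioi (0:ℝ)) :=
      (((hIF hp hpos hdist).const_mul c).add (hILF hp hpos hdist)).sub ((hIxF hp hpos hdist).const_mul d)
    have hmono : (∫ x in Set.Ioi (0:ℝ),
        (c * Fdens lam univ x + Real.log x * Fdens lam univ x - d * (x * Fdens lam univ x)))
        ≤ J := by
      apply setIntegral_mono_on hGint (hIJ hp hpos hdist hρ) measurableSet_Ioi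
      intro x hx
      have hx0 : (0:ℝ) < x := hx
      have h1x : 0 < 1 + ρ * x := by positivity
      have hkey : c + Real.log x - d * x ≤ Real.log (1 + ρ * x) := by
        have hu : (0:ℝ) < x * (1 + ρ * m) / (m * (1 + ρ * x)) := by positivity
        have key := Real.log_le_sub_one_of_pos hu
        have hlogu : Real.log (x * (1 + ρ * m) / (m * (1 + ρ * x)))
            = Real.log x + Real.log (1 + ρ * m) - Real.log m - Real.log (1 + ρ * x) := by
          rw [Real.log_div (by positivity) (by positivity),
            Real.log_mul hx0.ne' h1m.ne', Real.log_mul hmpos.ne' h1x.ne']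
          ring
        have hu1 : x * (1 + ρ * m) / (m * (1 + ρ * x)) - 1
            = (x - m) / (m * (1 + ρ * x)) := by
          field_simp
          ring
        have hcomp : (x - m) / (m * (1 + ρ * x)) ≤ (x - m) * d := by
          have hx1 : (0:ℝ) < m * (1 + ρ * x) := by positivity
          have hm1 : (0:ℝ) < m * (1 + ρ * m) := by positivity
          rw [hd, mul_one_div, div_le_div_iff₀ hx1 hm1]
          nlinarith [mul_nonneg (mul_nonneg hmpos.le hρ.le) (sq_nonneg (x - m))]
        rw [hlogu, hu1] at key
        have : Real.log x + Real.log (1 + ρ * m) - Real.log m - Real.log (1 + ρ * x)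
            ≤ (x - m) * d := le_trans key hcomp
        rw [hc]
        nlinarith [this]
      have hF := hFpos x hx
      have := mul_le_mul_of_nonneg_right hkey hF
      have hexp : (c + Real.log x - d * x) * Fdens lam univ x
          = c * Fdens lam univ x + Real.log x * Fdens lam univ x
            - d * (x * Fdens lam univ x) := by ring
      linarith
    have hval : (∫ x in Set.Ioi (0:ℝ),
        (c * Fdens lam univ x + Real.log x * Fdens lam univ x - d * (x * Fdens lam univ x)))
        = Real.log (1 + ρ * m) - Real.log m + (L - Real.eulerMascheroniConstant) := by
      have hI1 : IntegrableOn (fun x => c * Fdens lam univ x + Real.log x * Fdens lam univ x)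
          (Set.Ioi (0:ℝ)) := by
        exact ((hIF hp hpos hdist).const_mul c).add (hILF hp hpos hdist)
      rw [MeasureTheory.integral_sub hI1 ((hIxF hp hpos hdist).const_mul d),
        MeasureTheory.integral_add ((hIF hp hpos hdist).const_mul c) (hILF hp hpos hdist),
        MeasureTheory.integral_const_mul, MeasureTheory.integral_const_mul,
        hF1 hp hpos hdist, hFx hp hpos hdist, hFlog hp hpos hdist, ← hm, ← hL, hc]
      ring
    linarith
  have hstatesum : (∑ i, Real.log (lam i) / ∏ l ∈ univ.erase i, (1 - lam l / lam i)) = L := by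
    rw [hL]
    apply Finset.sum_congr rfl
    intro i _
    rw [div_eq_mul_inv, prod_one_sub_div_inv hp hpos hdist]
    ring
  constructor
  · linarith
  · rw [hstatesum]
    linarith

end FinalPart
end
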